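/- δ_FT is strictly decreasing on the interval [0.6375559772, 0.6457072160], δ_FT(0.6375559772) > π/√12, and there exists q ∈ (0.6457072159, 0.6457072160) with δ_FT(q) = π/√12. (Thus q₂ = 0.6457072159… is the largest radius ratio for which Fejes Tóth's perturbed packing has density at least that of the hexagonal packing.) -/

import Mathlib

open Real

/-- The density of Fejes Tóth's perturbation of Kennedy's triangulated two-disc packing,
as a function of the radius ratio `q`. -/
noncomputable def deltaFT (q : ℝ) : ℝ :=
  π * (q ^ 2 + 1) * (q + 1) ^ 4 * Real.sqrt (1 + 2 * q) /
    (4 * q * (2 * q ^ 2 + 5 * q + Real.sqrt (2 * q ^ 3 + 5 * q ^ 2 + 2 * q) + 2) *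
      (q + Real.sqrt (2 * q ^ 3 + 5 * q ^ 2 + 2 * q)))

set_option maxHeartbeats 2000000

/-- Auxiliary function: `deltaFT q = π * ((q^2+1)*(q+1)^4) / (8 * sFT q)` for `q > 0`. -/
noncomputable def sFT (q : ℝ) : ℝ :=
  (q^3+2*q^2) * Real.sqrt (1+2*q) + (q^3+3*q^2+q) * Real.sqrt (q^2+2*q)

lemma sFT_pos {q : ℝ} (hq : 0 < q) : 0 < sFT q := by
  have hA : 0 < q^3+2*q^2 := by nlinarith
  have hB : 0 ≤ q^3+3*q^2+q := by nlinarith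
  have ht : 0 < Real.sqrt (1+2*q) := Real.sqrt_pos.2 (by linarith)
  have hu : 0 ≤ Real.sqrt (q^2+2*q) := Real.sqrt_nonneg _
  exact add_pos_of_pos_of_nonneg (mul_pos hA ht) (mul_nonneg hB hu)

lemma deltaFT_eq {q : ℝ} (hq : 0 < q) :
    deltaFT q = π * ((q^2+1)*(q+1)^4) / (8 * sFT q) := by
  have h1 : (0:ℝ) ≤ 1+2*q := by linarith
  have hu0 : (0:ℝ) ≤ q^2+2*q := by positivity
  have hs : Real.sqrt (2*q^3+5*q^2+2*q) = Real.sqrt (1+2*q) * Real.sqrt (q^2+2*q) := by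
    rw [show (2*q^3+5*q^2+2*q : ℝ) = (1+2*q)*(q^2+2*q) by ring, Real.sqrt_mul h1]
  set t := Real.sqrt (1+2*q) with htdef
  set u := Real.sqrt (q^2+2*q) with hudef
  have ht2 : t^2 = 1+2*q := Real.sq_sqrt h1
  have hu2 : u^2 = q^2+2*q := Real.sq_sqrt hu0
  have ht0 : 0 < t := Real.sqrt_pos.2 (by linarith)
  have hS : 0 < sFT q := sFT_pos hq
  have key : 4 * q * (2 * q ^ 2 + 5 * q + t * u + 2) * (q + t * u) = 8 * sFT q * t := by
    unfold sFT
    rw [← htdef, ← hudef]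
    linear_combination (4*q*t^2)*hu2 - (4*q*(q^2+2*q))*ht2
  unfold deltaFT
  rw [hs, key]
  rw [div_eq_div_iff (by positivity) (by positivity)]
  ring

lemma mono1 : StrictMonoOn (fun q : ℝ => (q^3+2*q^2)^2*(1+2*q) / ((q^2+1)^2*(q+1)^8))
    (Set.Icc (0.6375559772 : ℝ) 0.6457072160) := by
  apply strictMonoOn_of_deriv_pos (convex_Icc _ _)
  · apply ContinuousOn.div
    · fun_prop
    · fun_prop
    · intro x hx
      have hx1 : (0:ℝ) < x := lt_of_lt_of_le (by norm_num) hx.1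
      exact ne_of_gt (mul_pos (by positivity) (pow_pos (by linarith) 8))
  · intro x hx
    rw [interior_Icc] at hx
    obtain ⟨hl, hu⟩ := hx
    have hx0 : (0:ℝ) < x := lt_trans (by norm_num) hl
    have hP2 : (0:ℝ) < (x^2+1)^2*(x+1)^8 := mul_pos (by positivity) (pow_pos (by linarith) 8)
    have hA0 : HasDerivAt (fun q:ℝ => q^3+2*q^2) (3*x^2+4*x) x := by
      have h1 := hasDerivAt_pow 3 x
      have h2 := (hasDerivAt_pow 2 x).const_mul (2:ℝ)
      exact (h1.add h2).congr_deriv (by push_cast [Pi.pow_apply]; ring)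
    have hP1 : HasDerivAt (fun q:ℝ => (q^3+2*q^2)^2*(1+2*q))
        (2*(x^3+2*x^2)*(3*x^2+4*x)*(1+2*x)+(x^3+2*x^2)^2*2) x := by
      have h3 : HasDerivAt (fun q:ℝ => 1+2*q) 2 x := by
        simpa using ((hasDerivAt_id x).const_mul (2:ℝ)).const_add 1
      exact ((hA0.pow 2).mul h3).congr_deriv (by push_cast [Pi.pow_apply]; ring)
    have hP2' : HasDerivAt (fun q:ℝ => (q^2+1)^2*(q+1)^8)
        (2*(x^2+1)*(2*x)*(x+1)^8+(x^2+1)^2*(8*(x+1)^7)) x := by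
      have ha : HasDerivAt (fun q:ℝ => q^2+1) (2*x) x := by
        simpa using (hasDerivAt_pow 2 x).add_const 1
      have hb : HasDerivAt (fun q:ℝ => q+1) 1 x := by
        simpa using (hasDerivAt_id x).add_const 1
      exact ((ha.pow 2).mul (hb.pow 8)).congr_deriv (by push_cast [Pi.pow_apply]; ring)
    have hD := hP1.div hP2' (ne_of_gt hP2)
    erw [hD.deriv]
    apply div_pos _ (pow_pos hP2 2)
    have hxl : (0.637:ℝ) ≤ x := by linarith
    have hxu : x ≤ (0.646:ℝ) := by linarith
    have hL : ∀ i : ℕ, (0.637:ℝ)^i ≤ x^i := fun i => pow_le_pow_left₀ (by norm_num) hxl i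
    have hU : ∀ i : ℕ, x^i ≤ (0.646:ℝ)^i := fun i => pow_le_pow_left₀ (by linarith) hxu i
    nlinarith [hL 2, hL 3, hL 4, hL 5, hL 6, hL 7, hL 8, hL 9, hL 10, hL 11, hL 12,
      hL 13, hL 14, hL 15, hL 16, hL 17, hL 18,
      hU 2, hU 3, hU 4, hU 5, hU 6, hU 7, hU 8, hU 9, hU 10, hU 11, hU 12,
      hU 13, hU 14, hU 15, hU 16, hU 17, hU 18]

lemma mono2 : StrictMonoOn (fun q : ℝ => (q^3+3*q^2+q)^2*(q^2+2*q) / ((q^2+1)^2*(q+1)^8))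
    (Set.Icc (0.6375559772 : ℝ) 0.6457072160) := by
  apply strictMonoOn_of_deriv_pos (convex_Icc _ _)
  · apply ContinuousOn.div
    · fun_prop
    · fun_prop
    · intro x hx
      have hx1 : (0:ℝ) < x := lt_of_lt_of_le (by norm_num) hx.1
      exact ne_of_gt (mul_pos (by positivity) (pow_pos (by linarith) 8))
  · intro x hx
    rw [interior_Icc] at hx
    obtain ⟨hl, hu⟩ := hx
    have hx0 : (0:ℝ) < x := lt_trans (by norm_num) hl
    have hP2 : (0:ℝ) < (x^2+1)^2*(x+1)^8 := mul_pos (by positivity) (pow_pos (by linarith) 8)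
    have hB0 : HasDerivAt (fun q:ℝ => q^3+3*q^2+q) (3*x^2+6*x+1) x := by
      have h1 := hasDerivAt_pow 3 x
      have h2 := (hasDerivAt_pow 2 x).const_mul (3:ℝ)
      exact ((h1.add h2).add (hasDerivAt_id x)).congr_deriv (by push_cast [Pi.pow_apply]; ring)
    have hP1 : HasDerivAt (fun q:ℝ => (q^3+3*q^2+q)^2*(q^2+2*q))
        (2*(x^3+3*x^2+x)*(3*x^2+6*x+1)*(x^2+2*x)+(x^3+3*x^2+x)^2*(2*x+2)) x := by
      have h3 : HasDerivAt (fun q:ℝ => q^2+2*q) (2*x+2) x := by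
        have := (hasDerivAt_pow 2 x).add ((hasDerivAt_id x).const_mul (2:ℝ))
        exact (this).congr_deriv (by push_cast [Pi.pow_apply]; ring)
      exact ((hB0.pow 2).mul h3).congr_deriv (by push_cast [Pi.pow_apply]; ring)
    have hP2' : HasDerivAt (fun q:ℝ => (q^2+1)^2*(q+1)^8)
        (2*(x^2+1)*(2*x)*(x+1)^8+(x^2+1)^2*(8*(x+1)^7)) x := by
      have ha : HasDerivAt (fun q:ℝ => q^2+1) (2*x) x := by
        simpa using (hasDerivAt_pow 2 x).add_const 1
      have hb : HasDerivAt (fun q:ℝ => q+1) 1 x := by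
        simpa using (hasDerivAt_id x).add_const 1
      exact ((ha.pow 2).mul (hb.pow 8)).congr_deriv (by push_cast [Pi.pow_apply]; ring)
    have hD := hP1.div hP2' (ne_of_gt hP2)
    erw [hD.deriv]
    apply div_pos _ (pow_pos hP2 2)
    have hxl : (0.637:ℝ) ≤ x := by linarith
    have hxu : x ≤ (0.646:ℝ) := by linarith
    have hL : ∀ i : ℕ, (0.637:ℝ)^i ≤ x^i := fun i => pow_le_pow_left₀ (by norm_num) hxl i
    have hU : ∀ i : ℕ, x^i ≤ (0.646:ℝ)^i := fun i => pow_le_pow_left₀ (by linarith) hxu i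
    nlinarith [hL 2, hL 3, hL 4, hL 5, hL 6, hL 7, hL 8, hL 9, hL 10, hL 11, hL 12,
      hL 13, hL 14, hL 15, hL 16, hL 17, hL 18, hL 19,
      hU 2, hU 3, hU 4, hU 5, hU 6, hU 7, hU 8, hU 9, hU 10, hU 11, hU 12,
      hU 13, hU 14, hU 15, hU 16, hU 17, hU 18, hU 19]

lemma glue {x y : ℝ} (hx : x ∈ Set.Icc (0.6375559772 : ℝ) 0.6457072160)
    (hy : y ∈ Set.Icc (0.6375559772 : ℝ) 0.6457072160) (hxy : x < y) :
    sFT x * ((y^2+1)*(y+1)^4) < sFT y * ((x^2+1)*(x+1)^4) := by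
  have hx0 : (0:ℝ) < x := lt_of_lt_of_le (by norm_num) hx.1
  have hy0 : (0:ℝ) < y := lt_of_lt_of_le (by norm_num) hy.1
  have hNx : (0:ℝ) < (x^2+1)^2*(x+1)^8 := mul_pos (by positivity) (pow_pos (by linarith) 8)
  have hNy : (0:ℝ) < (y^2+1)^2*(y+1)^8 := mul_pos (by positivity) (pow_pos (by linarith) 8)
  have h1 := mono1 hx hy hxy
  have h2 := mono2 hx hy hxy
  simp only [] at h1 h2
  rw [div_lt_div_iff₀ hNx hNy] at h1 h2
  have htx : (Real.sqrt (1+2*x))^2 = 1+2*x := Real.sq_sqrt (by linarith)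
  have hty : (Real.sqrt (1+2*y))^2 = 1+2*y := Real.sq_sqrt (by linarith)
  have hux : (Real.sqrt (x^2+2*x))^2 = x^2+2*x := Real.sq_sqrt (by positivity)
  have huy : (Real.sqrt (y^2+2*y))^2 = y^2+2*y := Real.sq_sqrt (by positivity)
  have hAy : (0:ℝ) ≤ (y^3+2*y^2) * Real.sqrt (1+2*y) * ((x^2+1)*(x+1)^4) := by
    have : (0:ℝ) ≤ (x^2+1)*(x+1)^4 := by positivity
    have h3 : (0:ℝ) ≤ y^3+2*y^2 := by nlinarith
    have := Real.sqrt_nonneg (1+2*y)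
    positivity
  have hBy : (0:ℝ) ≤ (y^3+3*y^2+y) * Real.sqrt (y^2+2*y) * ((x^2+1)*(x+1)^4) := by
    have h3 : (0:ℝ) ≤ y^3+3*y^2+y := by nlinarith
    have := Real.sqrt_nonneg (y^2+2*y)
    positivity
  have T1 : (x^3+2*x^2) * Real.sqrt (1+2*x) * ((y^2+1)*(y+1)^4)
      < (y^3+2*y^2) * Real.sqrt (1+2*y) * ((x^2+1)*(x+1)^4) := by
    apply lt_of_pow_lt_pow_left₀ 2 hAy
    have e1 : ((x^3+2*x^2) * Real.sqrt (1+2*x) * ((y^2+1)*(y+1)^4))^2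
        = (x^3+2*x^2)^2*(1+2*x) * ((y^2+1)^2*(y+1)^8) := by
      rw [mul_pow, mul_pow, htx]; ring
    have e2 : ((y^3+2*y^2) * Real.sqrt (1+2*y) * ((x^2+1)*(x+1)^4))^2
        = (y^3+2*y^2)^2*(1+2*y) * ((x^2+1)^2*(x+1)^8) := by
      rw [mul_pow, mul_pow, hty]; ring
    rw [e1, e2]; exact h1
  have T2 : (x^3+3*x^2+x) * Real.sqrt (x^2+2*x) * ((y^2+1)*(y+1)^4)
      < (y^3+3*y^2+y) * Real.sqrt (y^2+2*y) * ((x^2+1)*(x+1)^4) := by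
    apply lt_of_pow_lt_pow_left₀ 2 hBy
    have e1 : ((x^3+3*x^2+x) * Real.sqrt (x^2+2*x) * ((y^2+1)*(y+1)^4))^2
        = (x^3+3*x^2+x)^2*(x^2+2*x) * ((y^2+1)^2*(y+1)^8) := by
      rw [mul_pow, mul_pow, hux]; ring
    have e2 : ((y^3+3*y^2+y) * Real.sqrt (y^2+2*y) * ((x^2+1)*(x+1)^4))^2
        = (y^3+3*y^2+y)^2*(y^2+2*y) * ((x^2+1)^2*(x+1)^8) := by
      rw [mul_pow, mul_pow, huy]; ring
    rw [e1, e2]; exact h2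
  unfold sFT
  linarith [T1, T2]

lemma sq_8S {q : ℝ} (hq : 0 ≤ q) :
    (8 * sFT q)^2 = 64*(q^3+2*q^2)^2*(1+2*q) + 64*(q^3+3*q^2+q)^2*(q^2+2*q)
      + 128*(q^3+2*q^2)*(q^3+3*q^2+q)*Real.sqrt ((1+2*q)*(q^2+2*q)) := by
  have ht2 : Real.sqrt (1+2*q)^2 = 1+2*q := Real.sq_sqrt (by linarith)
  have hu2 : Real.sqrt (q^2+2*q)^2 = q^2+2*q := Real.sq_sqrt (by positivity)
  have hw : Real.sqrt ((1+2*q)*(q^2+2*q)) = Real.sqrt (1+2*q) * Real.sqrt (q^2+2*q) :=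
    Real.sqrt_mul (by linarith) _
  unfold sFT
  rw [hw]
  linear_combination (64*(q^3+2*q^2)^2)*ht2 + (64*(q^3+3*q^2+q)^2)*hu2

lemma lt_sqrt12 {q : ℝ} (hq : 0 < q)
    (h : (128*(q^3+2*q^2)*(q^3+3*q^2+q))^2*((1+2*q)*(q^2+2*q))
        < (12*((q^2+1)*(q+1)^4)^2
            - 64*((q^3+2*q^2)^2*(1+2*q)+(q^3+3*q^2+q)^2*(q^2+2*q)))^2)
    (hR : 0 ≤ 12*((q^2+1)*(q+1)^4)^2
            - 64*((q^3+2*q^2)^2*(1+2*q)+(q^3+3*q^2+q)^2*(q^2+2*q))) :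
    8 * sFT q < Real.sqrt 12 * ((q^2+1)*(q+1)^4) := by
  have hw2 : (Real.sqrt ((1+2*q)*(q^2+2*q)))^2 = (1+2*q)*(q^2+2*q) :=
    Real.sq_sqrt (mul_nonneg (by linarith) (by positivity))
  have hCw : 128*(q^3+2*q^2)*(q^3+3*q^2+q)*Real.sqrt ((1+2*q)*(q^2+2*q))
      < 12*((q^2+1)*(q+1)^4)^2
          - 64*((q^3+2*q^2)^2*(1+2*q)+(q^3+3*q^2+q)^2*(q^2+2*q)) := by
    apply lt_of_pow_lt_pow_left₀ 2 hR
    calc (128*(q^3+2*q^2)*(q^3+3*q^2+q)*Real.sqrt ((1+2*q)*(q^2+2*q)))^2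
        = (128*(q^3+2*q^2)*(q^3+3*q^2+q))^2*((1+2*q)*(q^2+2*q)) := by
          rw [mul_pow, hw2]
      _ < _ := h
  have h8S : (8 * sFT q)^2 < 12*((q^2+1)*(q+1)^4)^2 := by
    rw [sq_8S hq.le]; linarith
  have hN : 0 ≤ Real.sqrt 12 * ((q^2+1)*(q+1)^4) := by positivity
  apply lt_of_pow_lt_pow_left₀ 2 hN
  have e : (Real.sqrt 12 * ((q^2+1)*(q+1)^4))^2 = 12*((q^2+1)*(q+1)^4)^2 := by
    rw [mul_pow, Real.sq_sqrt (by norm_num : (0:ℝ) ≤ 12)]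
  rw [e]
  exact h8S

lemma gt_sqrt12 {q : ℝ} (hq : 0 < q)
    (h : (12*((q^2+1)*(q+1)^4)^2
            - 64*((q^3+2*q^2)^2*(1+2*q)+(q^3+3*q^2+q)^2*(q^2+2*q)))^2
        < (128*(q^3+2*q^2)*(q^3+3*q^2+q))^2*((1+2*q)*(q^2+2*q))) :
    Real.sqrt 12 * ((q^2+1)*(q+1)^4) < 8 * sFT q := by
  have hw2 : (Real.sqrt ((1+2*q)*(q^2+2*q)))^2 = (1+2*q)*(q^2+2*q) :=
    Real.sq_sqrt (mul_nonneg (by linarith) (by positivity))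
  have hCnn : 0 ≤ 128*(q^3+2*q^2)*(q^3+3*q^2+q)*Real.sqrt ((1+2*q)*(q^2+2*q)) := by
    have h1 : (0:ℝ) ≤ 128*(q^3+2*q^2)*(q^3+3*q^2+q) := by nlinarith
    exact mul_nonneg h1 (Real.sqrt_nonneg _)
  have hCw : 12*((q^2+1)*(q+1)^4)^2
        - 64*((q^3+2*q^2)^2*(1+2*q)+(q^3+3*q^2+q)^2*(q^2+2*q))
      < 128*(q^3+2*q^2)*(q^3+3*q^2+q)*Real.sqrt ((1+2*q)*(q^2+2*q)) := by
    apply lt_of_pow_lt_pow_left₀ 2 hCnn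
    have e : (128*(q^3+2*q^2)*(q^3+3*q^2+q)*Real.sqrt ((1+2*q)*(q^2+2*q)))^2
        = (128*(q^3+2*q^2)*(q^3+3*q^2+q))^2*((1+2*q)*(q^2+2*q)) := by
      rw [mul_pow, hw2]
    rw [e]
    exact h
  have hSnn : 0 ≤ 8 * sFT q := by
    have hA : 0 ≤ q^3+2*q^2 := by nlinarith
    have hB : 0 ≤ q^3+3*q^2+q := by nlinarith
    unfold sFT
    have := Real.sqrt_nonneg (1+2*q)
    have := Real.sqrt_nonneg (q^2+2*q)
    nlinarith
  apply lt_of_pow_lt_pow_left₀ 2 hSnn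
  have e : (Real.sqrt 12 * ((q^2+1)*(q+1)^4))^2 = 12*((q^2+1)*(q+1)^4)^2 := by
    rw [mul_pow, Real.sq_sqrt (by norm_num : (0:ℝ) ≤ 12)]
  rw [e, sq_8S hq.le]; linarith

lemma deltaFT_gt {q : ℝ} (hq : 0 < q)
    (h8 : 8 * sFT q < Real.sqrt 12 * ((q^2+1)*(q+1)^4)) :
    π / Real.sqrt 12 < deltaFT q := by
  rw [deltaFT_eq hq]
  have hS : 0 < sFT q := sFT_pos hq
  have h12 : (0:ℝ) < Real.sqrt 12 := Real.sqrt_pos.2 (by norm_num)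
  rw [div_lt_div_iff₀ h12 (by linarith)]
  nlinarith [Real.pi_pos, h8]

lemma deltaFT_lt {q : ℝ} (hq : 0 < q)
    (h8 : Real.sqrt 12 * ((q^2+1)*(q+1)^4) < 8 * sFT q) :
    deltaFT q < π / Real.sqrt 12 := by
  rw [deltaFT_eq hq]
  have hS : 0 < sFT q := sFT_pos hq
  have h12 : (0:ℝ) < Real.sqrt 12 := Real.sqrt_pos.2 (by norm_num)
  rw [div_lt_div_iff₀ (by linarith) h12]
  nlinarith [Real.pi_pos, h8]

theorem deltaFT_properties :
    StrictAntiOn deltaFT (Set.Icc (0.6375559772 : ℝ) 0.6457072160) ∧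
      deltaFT 0.6375559772 > π / Real.sqrt 12 ∧
      ∃ q ∈ Set.Ioo (0.6457072159 : ℝ) 0.6457072160, deltaFT q = π / Real.sqrt 12 := by
  refine ⟨?_, ?_, ?_⟩
  · intro x hx y hy hxy
    have hx0 : (0:ℝ) < x := lt_of_lt_of_le (by norm_num) hx.1
    have hy0 : (0:ℝ) < y := lt_of_lt_of_le (by norm_num) hy.1
    rw [deltaFT_eq hx0, deltaFT_eq hy0]
    have hSx : 0 < sFT x := sFT_pos hx0
    have hSy : 0 < sFT y := sFT_pos hy0
    rw [div_lt_div_iff₀ (by linarith) (by linarith)]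
    have hg := glue hx hy hxy
    nlinarith [Real.pi_pos, hg]
  · exact deltaFT_gt (by norm_num) (lt_sqrt12 (by norm_num) (by norm_num) (by norm_num))
  · have hc : π / Real.sqrt 12 < deltaFT 0.6457072159 :=
      deltaFT_gt (by norm_num) (lt_sqrt12 (by norm_num) (by norm_num) (by norm_num))
    have hd : deltaFT 0.6457072160 < π / Real.sqrt 12 :=
      deltaFT_lt (by norm_num) (gt_sqrt12 (by norm_num) (by norm_num))
    have hcont : ContinuousOn deltaFT (Set.Icc (0.6457072159 : ℝ) 0.6457072160) := by
      unfold deltaFT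
      apply ContinuousOn.div
      · fun_prop
      · fun_prop
      · intro x hx
        have hx0 : (0:ℝ) < x := lt_of_lt_of_le (by norm_num) hx.1
        have hsn : 0 ≤ Real.sqrt (2*x^3+5*x^2+2*x) := Real.sqrt_nonneg _
        have h1 : (0:ℝ) < 2*x^2+5*x+Real.sqrt (2*x^3+5*x^2+2*x)+2 := by nlinarith
        have h2 : (0:ℝ) < x+Real.sqrt (2*x^3+5*x^2+2*x) := by nlinarith
        have := mul_pos (mul_pos (by linarith : (0:ℝ) < 4*x) h1) h2
        intro hzero
        rw [hzero] at this
        exact lt_irrefl 0 this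
    have hmem : π / Real.sqrt 12 ∈ Set.Ioo (deltaFT 0.6457072160) (deltaFT 0.6457072159) :=
      ⟨hd, hc⟩
    obtain ⟨q, hq, hfq⟩ := intermediate_value_Ioo' (by norm_num) hcont hmem
    exact ⟨q, hq, hfq⟩
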